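/- arXiv:1804.09329 — 2 statements merged into one kernel-verified Lean document; each statement's English description precedes it below -/
import Mathlib

section
/- For the jointly robust prior density, the variance of β_i equals (a+p+1)·((p+1)^2 + p + a·p + 1) / ((p+1)^2 (p+2) C_i^2 b^2) for each i = 1,…,p. -/
open MeasureTheory Real Finset

open scoped ENNReal

lemma lint_scale (c : ℝ) (hc : 0 < c) (g : ℝ → ℝ≥0∞) (hg : Measurable g) :
    ∫⁻ t in Set.Ioi (0:ℝ), g (c * t) = ENNReal.ofReal (1/c) * ∫⁻ s in Set.Ioi (0:ℝ), g s := by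
  have hmap : Measure.map (fun t : ℝ => c * t) volume
      = ENNReal.ofReal |c⁻¹| • volume := Real.map_volume_mul_left (ne_of_gt hc)
  have hpre : (fun t : ℝ => c * t) ⁻¹' (Set.Ioi 0) = Set.Ioi 0 := by
    ext t; simp [Set.mem_preimage, Set.mem_Ioi, mul_pos_iff_of_pos_left, hc]
  calc ∫⁻ t in Set.Ioi (0:ℝ), g (c * t)
      = ∫⁻ s in Set.Ioi (0:ℝ), g s ∂(Measure.map (fun t : ℝ => c * t) volume) := by
        rw [setLIntegral_map measurableSet_Ioi hg (measurable_const_mul c), hpre]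
    _ = ENNReal.ofReal (1/c) * ∫⁻ s in Set.Ioi (0:ℝ), g s := by
        rw [hmap, Measure.restrict_smul, lintegral_smul_measure,
          abs_of_pos (inv_pos.mpr hc), one_div, smul_eq_mul]

lemma lint_shift (S : ℝ) (g : ℝ → ℝ≥0∞) (hg : Measurable g) :
    ∫⁻ t in Set.Ioi (0:ℝ), g (S + t) = ∫⁻ s in Set.Ioi S, g s := by
  have hmp : MeasurePreserving (fun t : ℝ => S + t) volume volume :=
    measurePreserving_add_left volume S
  have hpre : (fun t : ℝ => S + t) ⁻¹' (Set.Ioi S) = Set.Ioi 0 := by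
    ext t; simp [Set.mem_preimage, Set.mem_Ioi]
  rw [← hpre, hmp.setLIntegral_comp_preimage measurableSet_Ioi hg]

lemma lint_pow_Ioo (m : ℕ) (u : ℝ) (hu : 0 < u) :
    ∫⁻ s in Set.Ioo (0:ℝ) u, ENNReal.ofReal (s^m) = ENNReal.ofReal (u^(m+1)/(m+1)) := by
  have hint : IntegrableOn (fun s : ℝ => s ^ m) (Set.Ioo 0 u) volume :=
    ((intervalIntegral.intervalIntegrable_pow m (a := 0) (b := u)).1).mono_set
      Set.Ioo_subset_Ioc_self
  rw [← ofReal_integral_eq_lintegral_ofReal hint]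
  · congr 1
    rw [← MeasureTheory.integral_Ioc_eq_integral_Ioo,
      ← intervalIntegral.integral_of_le hu.le, integral_pow]
    simp
  · filter_upwards [ae_restrict_mem measurableSet_Ioo] with s hs
    exact pow_nonneg hs.1.le m

lemma lint_tail (m : ℕ) (g : ℝ → ℝ≥0∞) (hg : Measurable g) :
    ∫⁻ s in Set.Ioi (0:ℝ), ENNReal.ofReal (s^m) * ∫⁻ u in Set.Ioi s, g u
      = ENNReal.ofReal (1/(m+1) : ℝ)
        * ∫⁻ u in Set.Ioi (0:ℝ), ENNReal.ofReal (u^(m+1)) * g u := by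
  set f : ℝ → ℝ → ℝ≥0∞ := fun s u =>
    ENNReal.ofReal (s^m) * ({p : ℝ × ℝ | p.1 < p.2}.indicator (fun p => g p.2) (s, u)) with hf
  have hmeas : AEMeasurable (Function.uncurry f)
      ((volume.restrict (Set.Ioi (0:ℝ))).prod (volume.restrict (Set.Ioi (0:ℝ)))) := by
    apply Measurable.aemeasurable
    apply ((measurable_fst.pow_const m).ennreal_ofReal).mul
    exact Measurable.indicator (hg.comp measurable_snd)
      (measurableSet_lt measurable_fst measurable_snd)
  have key : ∀ s u : ℝ, f s u = ENNReal.ofReal (s^m) * (Set.Ioi s).indicator g u := by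
    intro s u; by_cases h : s < u <;> simp [hf, Set.indicator, h, Set.mem_Ioi]
  have h1 : ∫⁻ s in Set.Ioi (0:ℝ), ∫⁻ u in Set.Ioi (0:ℝ), f s u
      = ∫⁻ s in Set.Ioi (0:ℝ), ENNReal.ofReal (s^m) * ∫⁻ u in Set.Ioi s, g u := by
    apply setLIntegral_congr_fun measurableSet_Ioi
    intro s hs
    simp_rw [key]
    rw [lintegral_const_mul _ (hg.indicator measurableSet_Ioi),
      lintegral_indicator measurableSet_Ioi, Measure.restrict_restrict measurableSet_Ioi,
      Set.Ioi_inter_Ioi, max_eq_left hs.le]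
  have h2 : ∫⁻ u in Set.Ioi (0:ℝ), ∫⁻ s in Set.Ioi (0:ℝ), f s u
      = ∫⁻ u in Set.Ioi (0:ℝ), ENNReal.ofReal (1/(m+1) : ℝ)
          * (ENNReal.ofReal (u^(m+1)) * g u) := by
    apply setLIntegral_congr_fun measurableSet_Ioi
    intro u hu
    have keyu : ∀ s : ℝ, f s u = (Set.Iio u).indicator (fun s => ENNReal.ofReal (s^m) * g u) s := by
      intro s; by_cases h : s < u <;> simp [hf, Set.indicator, h, Set.mem_Iio, Set.mem_Ioi]
    simp_rw [keyu]
    rw [lintegral_indicator measurableSet_Iio, Measure.restrict_restrict measurableSet_Iio,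
      Set.Iio_inter_Ioi]
    rw [lintegral_mul_const _ (measurable_id'.pow_const m).ennreal_ofReal,
      lint_pow_Ioo m u hu, ← mul_assoc, ← ENNReal.ofReal_mul (by positivity)]
    congr 2
    field_simp
  rw [h1.symm.trans (lintegral_lintegral_swap hmeas), h2,
    lintegral_const_mul (f := fun u => ENNReal.ofReal (u^(m+1)) * g u) _ (((measurable_id'.pow_const (m+1)).ennreal_ofReal).mul hg)]

lemma measurable_orthant (n : ℕ) : MeasurableSet {x : Fin n → ℝ | ∀ j, 0 < x j} := by
  have h : {x : Fin n → ℝ | ∀ j, 0 < x j} = Set.pi Set.univ (fun _ => Set.Ioi 0) := by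
    ext x; simp [Set.mem_pi]
  rw [h]; exact MeasurableSet.univ_pi fun _ => measurableSet_Ioi

lemma jr_slice : ∀ (n : ℕ) (g : ℝ → ℝ≥0∞), Measurable g → ∀ (c : Fin (n+1) → ℝ), (∀ j, 0 < c j) →
    ∀ (i : Fin (n+1)) (k : ℕ),
    ∫⁻ x in {x : Fin (n+1) → ℝ | ∀ j, 0 < x j},
        ENNReal.ofReal (x i ^ k) * g (∑ l, c l * x l)
      = ENNReal.ofReal ((k.factorial : ℝ) / ((n+k).factorial * ((∏ l, c l) * c i ^ k)))
        * ∫⁻ s in Set.Ioi (0:ℝ), ENNReal.ofReal (s ^ (n + k)) * g s := by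
  intro n
  induction n with
  | zero =>
    intro g hg c hc i k
    obtain rfl : i = 0 := Fin.eq_zero i
    have hc0 := hc 0
    set e := MeasurableEquiv.funUnique (Fin 1) ℝ with he
    have hmp : MeasurePreserving e volume volume :=
      volume_preserving_funUnique (Fin 1) ℝ
    set f : ℝ → ℝ≥0∞ := fun t => ENNReal.ofReal (t ^ k) * g (c 0 * t) with hfdef
    have hfm : Measurable f :=
      ((measurable_id'.pow_const k).ennreal_ofReal).mul (hg.comp (measurable_const_mul _))
    have hset : {x : Fin 1 → ℝ | ∀ j, 0 < x j} = e ⁻¹' Set.Ioi 0 := by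
      ext x
      simp [he, MeasurableEquiv.funUnique_apply, Fin.forall_fin_one]
    have hint : ∀ x : Fin 1 → ℝ,
        ENNReal.ofReal (x 0 ^ k) * g (∑ l, c l * x l) = f (e x) := by
      intro x
      simp [hfdef, he, MeasurableEquiv.funUnique_apply, Fin.sum_univ_one]
    calc ∫⁻ x in {x : Fin 1 → ℝ | ∀ j, 0 < x j},
            ENNReal.ofReal (x 0 ^ k) * g (∑ l, c l * x l)
        = ∫⁻ x in e ⁻¹' Set.Ioi 0, f (e x) := by
          rw [← hset]; exact lintegral_congr fun x => hint x
      _ = ∫⁻ t in Set.Ioi (0:ℝ), f t :=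
          hmp.setLIntegral_comp_preimage measurableSet_Ioi hfm
      _ = ∫⁻ t in Set.Ioi (0:ℝ),
            (fun s => ENNReal.ofReal ((s / c 0) ^ k) * g s) (c 0 * t) := by
          apply lintegral_congr fun t => ?_
          rw [hfdef]
          simp only
          rw [mul_div_cancel_left₀ _ (ne_of_gt hc0)]
      _ = ENNReal.ofReal (1 / c 0) * ∫⁻ s in Set.Ioi (0:ℝ),
            ENNReal.ofReal ((s / c 0) ^ k) * g s :=
          lint_scale _ hc0 _
            (((measurable_id'.div_const _).pow_const k).ennreal_ofReal.mul hg)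
      _ = ENNReal.ofReal (1 / c 0) * ∫⁻ s in Set.Ioi (0:ℝ),
            ENNReal.ofReal ((1 / c 0) ^ k) * (ENNReal.ofReal (s ^ k) * g s) := by
          congr 1
          apply setLIntegral_congr_fun measurableSet_Ioi
          intro s hs
          beta_reduce
          rw [← mul_assoc, ← ENNReal.ofReal_mul (by positivity)]
          congr 2
          rw [div_pow, div_eq_mul_inv, one_div, inv_pow]
          ring
      _ = ENNReal.ofReal ((Nat.factorial k : ℝ)
            / ((0 + k).factorial * ((∏ l, c l) * c 0 ^ k)))
          * ∫⁻ s in Set.Ioi (0:ℝ), ENNReal.ofReal (s ^ (0 + k)) * g s := by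
          rw [lintegral_const_mul (f := fun s => ENNReal.ofReal (s^k) * g s) _ ((measurable_id'.pow_const k).ennreal_ofReal.mul hg),
            ← mul_assoc, ← ENNReal.ofReal_mul (by positivity), Nat.zero_add k]
          congr 2
          rw [Fin.prod_univ_one]
          field_simp
          rw [← mul_pow, one_div_mul_cancel hc0.ne', one_pow]
  | succ n IH =>
    intro g hg c hc i k
    obtain ⟨j, hj⟩ := exists_ne i
    obtain ⟨i', hi'⟩ := Fin.exists_succAbove_eq (Ne.symm hj)
    set G : ℝ → ℝ≥0∞ := fun S => ∫⁻ s in Set.Ioi S, g s with hG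
    have hGanti : Antitone G := by
      intro S1 S2 h
      exact lintegral_mono' (Measure.restrict_mono (Set.Ioi_subset_Ioi h) le_rfl) le_rfl
    have hGm : Measurable G := hGanti.measurable
    set e := MeasurableEquiv.piFinSuccAbove (fun _ : Fin (n+2) => ℝ) j with he
    have hmp : MeasurePreserving e volume volume :=
      volume_preserving_piFinSuccAbove (fun _ : Fin (n+2) => ℝ) j
    set O := {y : Fin (n+1) → ℝ | ∀ l, 0 < y l} with hO
    have hOm : MeasurableSet O := measurable_orthant (n+1)
    set f : ℝ × (Fin (n+1) → ℝ) → ℝ≥0∞ := fun q =>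
      ENNReal.ofReal (q.2 i' ^ k) * g (c j * q.1 + ∑ l, c (j.succAbove l) * q.2 l) with hfdef
    have hsum : Measurable fun q : ℝ × (Fin (n+1) → ℝ) =>
        c j * q.1 + ∑ l, c (j.succAbove l) * q.2 l := by
      apply (measurable_fst.const_mul _).add
      exact Finset.measurable_sum _ fun l _ =>
        ((measurable_pi_apply l).comp measurable_snd).const_mul _
    have hfm : Measurable f :=
      ((((measurable_pi_apply i').comp measurable_snd).pow_const k).ennreal_ofReal).mul
        (hg.comp hsum)
    have hset : {x : Fin (n+2) → ℝ | ∀ j', 0 < x j'} = e ⁻¹' (Set.Ioi 0 ×ˢ O) := by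
      ext x
      simp only [Set.mem_setOf_eq, Set.mem_preimage, Set.mem_prod, Set.mem_Ioi, he, hO,
        MeasurableEquiv.piFinSuccAbove_apply, Fin.insertNthEquiv_symm_apply, Fin.removeNth]
      exact Fin.forall_iff_succAbove j
    have hint : ∀ x : Fin (n+2) → ℝ,
        ENNReal.ofReal (x i ^ k) * g (∑ l, c l * x l) = f (e x) := by
      intro x
      simp only [hfdef, he, MeasurableEquiv.piFinSuccAbove_apply,
        Fin.insertNthEquiv_symm_apply, Fin.removeNth]
      rw [← hi', Fin.sum_univ_succAbove (fun l => c l * x l) j]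
    calc ∫⁻ x in {x : Fin (n+2) → ℝ | ∀ j', 0 < x j'},
            ENNReal.ofReal (x i ^ k) * g (∑ l, c l * x l)
        = ∫⁻ x in e ⁻¹' (Set.Ioi 0 ×ˢ O), f (e x) := by
          rw [← hset]; exact lintegral_congr fun x => hint x
      _ = ∫⁻ q in Set.Ioi 0 ×ˢ O, f q :=
          hmp.setLIntegral_comp_preimage (measurableSet_Ioi.prod hOm) hfm
      _ = ∫⁻ q, f q ∂((volume.restrict (Set.Ioi 0)).prod (volume.restrict O)) := by
          rw [Measure.volume_eq_prod, Measure.prod_restrict]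
      _ = ∫⁻ y, (∫⁻ t, f (t, y) ∂(volume.restrict (Set.Ioi 0))) ∂(volume.restrict O) :=
          lintegral_prod_symm f hfm.aemeasurable
      _ = ∫⁻ y in O, ENNReal.ofReal (1 / c j)
            * (ENNReal.ofReal (y i' ^ k) * G (∑ l, c (j.succAbove l) * y l)) := by
          apply lintegral_congr fun y => ?_
          have hm1 : Measurable fun t : ℝ =>
              g ((∑ l, c (j.succAbove l) * y l) + c j * t) :=
            hg.comp ((measurable_const_mul _).const_add _)
          have e0 : (∫⁻ t, f (t, y) ∂(volume.restrict (Set.Ioi 0)))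
              = ∫⁻ t in Set.Ioi (0:ℝ), ENNReal.ofReal (y i' ^ k)
                  * g ((∑ l, c (j.succAbove l) * y l) + c j * t) := by
            apply lintegral_congr fun t => ?_
            simp only [hfdef]
            rw [add_comm (c j * t)]
          have e1 : ∫⁻ t in Set.Ioi (0:ℝ), g ((∑ l, c (j.succAbove l) * y l) + c j * t)
              = ENNReal.ofReal (1 / c j)
                * ∫⁻ u in Set.Ioi (0:ℝ), g ((∑ l, c (j.succAbove l) * y l) + u) :=
            lint_scale (c j) (hc j) (fun u => g ((∑ l, c (j.succAbove l) * y l) + u))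
              (hg.comp (measurable_const_add _))
          rw [e0, lintegral_const_mul _ hm1, e1, lint_shift _ _ hg, hG]
          ring
      _ = ENNReal.ofReal (1 / c j) * ∫⁻ y in O,
            ENNReal.ofReal (y i' ^ k) * G (∑ l, c (j.succAbove l) * y l) := by
          rw [lintegral_const_mul]
          exact (((measurable_pi_apply i').pow_const k).ennreal_ofReal).mul
            (hGm.comp (Finset.measurable_sum _ fun l _ =>
              (measurable_pi_apply l).const_mul _))
      _ = ENNReal.ofReal (1 / c j)
          * (ENNReal.ofReal ((Nat.factorial k : ℝ)
              / ((n+k).factorial * ((∏ l, c (j.succAbove l)) * c (j.succAbove i') ^ k)))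
            * ∫⁻ s in Set.Ioi (0:ℝ), ENNReal.ofReal (s ^ (n + k)) * G s) := by
          rw [IH G hGm (fun l => c (j.succAbove l)) (fun l => hc _) i' k]
      _ = ENNReal.ofReal (1 / c j)
          * (ENNReal.ofReal ((Nat.factorial k : ℝ)
              / ((n+k).factorial * ((∏ l, c (j.succAbove l)) * c (j.succAbove i') ^ k)))
            * (ENNReal.ofReal (1/((n+k : ℕ)+1) : ℝ)
              * ∫⁻ u in Set.Ioi (0:ℝ), ENNReal.ofReal (u ^ (n+k+1)) * g u)) := by
          rw [hG, lint_tail (n+k) g hg]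
      _ = ENNReal.ofReal ((Nat.factorial k : ℝ)
            / ((n+1+k).factorial * ((∏ l, c l) * c i ^ k)))
          * ∫⁻ s in Set.Ioi (0:ℝ), ENNReal.ofReal (s ^ (n + 1 + k)) * g s := by
          have h1 : (0:ℝ) < c j := hc j
          have h2 : (0:ℝ) < ∏ l, c (j.succAbove l) := Finset.prod_pos fun l _ => hc _
          have h3 : (0:ℝ) < c (j.succAbove i') ^ k := pow_pos (hc _) k
          have h4 : (0:ℝ) < ((n+k).factorial : ℝ) := by exact_mod_cast Nat.factorial_pos _
          have ha1 : (0:ℝ) ≤ 1 / c j := by positivity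
          have ha2 : (0:ℝ) ≤ 1 / c j * ((Nat.factorial k : ℝ)
              / ((n+k).factorial * ((∏ l, c (j.succAbove l)) * c (j.succAbove i') ^ k))) := by
            positivity
          rw [show n + 1 + k = n + k + 1 from by omega, ← mul_assoc, ← mul_assoc,
            ← ENNReal.ofReal_mul ha1, ← ENNReal.ofReal_mul ha2]
          congr 1
          rw [Fin.prod_univ_succAbove c j, hi', Nat.factorial_succ (n+k)]
          push_cast
          field_simp

lemma lint_gamma (m : ℕ) (a b : ℝ) (hb : 0 < b) (hA : 0 < a + m + 1) :
    ∫⁻ s in Set.Ioi (0:ℝ), ENNReal.ofReal (s ^ m) * ENNReal.ofReal (s ^ a * rexp (-b * s))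
      = ENNReal.ofReal ((1/b) ^ (a + m + 1) * Real.Gamma (a + m + 1)) := by
  have hint : IntegrableOn (fun t : ℝ => t ^ (a + m + 1 - 1 : ℝ) * rexp (-(b * t)))
      (Set.Ioi 0) := by
    have h1 : IntegrableOn (fun t : ℝ => rexp (-(b * t)) * (b * t) ^ (a + m + 1 - 1 : ℝ))
        (Set.Ioi 0) := by
      have h0 := Real.GammaIntegral_convergent hA
      have := (integrableOn_Ioi_comp_mul_left_iff
        (fun x : ℝ => rexp (-x) * x ^ (a + m + 1 - 1 : ℝ)) 0 hb).mpr
      rw [mul_zero] at this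
      exact this h0
    have h2 := h1.const_mul ((1/b) ^ (a + m + 1 - 1 : ℝ))
    apply h2.congr
    filter_upwards [ae_restrict_mem measurableSet_Ioi] with t ht
    have ht' : (0:ℝ) < t := ht
    rw [Real.mul_rpow hb.le ht'.le, one_div, Real.inv_rpow hb.le]
    field_simp [ne_of_gt (Real.rpow_pos_of_pos hb (a + m + 1 - 1))]
  calc ∫⁻ s in Set.Ioi (0:ℝ), ENNReal.ofReal (s ^ m) * ENNReal.ofReal (s ^ a * rexp (-b * s))
      = ∫⁻ s in Set.Ioi (0:ℝ), ENNReal.ofReal (s ^ (a + m + 1 - 1 : ℝ) * rexp (-(b * s))) := by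
        apply setLIntegral_congr_fun measurableSet_Ioi
        intro s hs
        have hs' : (0:ℝ) < s := hs
        beta_reduce
        rw [← ENNReal.ofReal_mul (by positivity)]
        congr 1
        rw [show (a + m + 1 - 1 : ℝ) = a + m by ring, Real.rpow_add hs',
          ← Real.rpow_natCast s m, neg_mul]
        ring
    _ = ENNReal.ofReal (∫ s in Set.Ioi (0:ℝ), s ^ (a + m + 1 - 1 : ℝ) * rexp (-(b * s))) := by
        rw [ofReal_integral_eq_lintegral_ofReal hint]
        filter_upwards [ae_restrict_mem measurableSet_Ioi] with s hs
        have hs' : (0:ℝ) < s := hs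
        positivity
    _ = ENNReal.ofReal ((1/b) ^ (a + m + 1) * Real.Gamma (a + m + 1)) := by
        rw [integral_rpow_mul_exp_neg_mul_Ioi hA hb]

lemma jr_moment (p : ℕ) (a b : ℝ) (ha : -(p + 1 : ℝ) < a) (hb : 0 < b)
    (C : Fin p → ℝ) (hC : ∀ l, 0 < C l) (i : Fin p) (k : ℕ) :
    ∫ x : Fin (p + 1) → ℝ in {x | ∀ j, 0 < x j},
        x i.castSucc ^ k *
          ((∑ l : Fin p, C l * x l.castSucc + x (Fin.last p)) ^ a *
            Real.exp (-b * (∑ l : Fin p, C l * x l.castSucc + x (Fin.last p))))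
      = (k.factorial : ℝ) / (((p+k).factorial : ℝ) * ((∏ l, C l) * C i ^ k))
        * ((1/b) ^ (a + (p+k : ℕ) + 1) * Real.Gamma (a + (p+k : ℕ) + 1)) := by
  have hA : (0:ℝ) < a + (p+k : ℕ) + 1 := by
    push_cast
    have : (0:ℝ) ≤ k := Nat.cast_nonneg k
    linarith
  set c : Fin (p+1) → ℝ := Fin.snoc C 1 with hcdef
  have hc : ∀ j, 0 < c j := by
    intro j
    refine Fin.lastCases ?_ ?_ j
    · simp [hcdef, Fin.snoc_last]
    · intro l; simpa [hcdef, Fin.snoc_castSucc] using hC l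
  have hsum : ∀ x : Fin (p+1) → ℝ,
      ∑ l, c l * x l = ∑ l : Fin p, C l * x l.castSucc + x (Fin.last p) := by
    intro x
    rw [Fin.sum_univ_castSucc]
    simp [hcdef, Fin.snoc_castSucc, Fin.snoc_last]
  set g : ℝ → ℝ≥0∞ := fun s => ENNReal.ofReal (s ^ a * rexp (-b * s)) with hgdef
  have hg : Measurable g := by
    apply Measurable.ennreal_ofReal
    exact (measurable_id'.pow_const a).mul ((measurable_id'.const_mul (-b)).exp)
  have hS : Measurable fun x : Fin (p+1) → ℝ =>
      ∑ l : Fin p, C l * x l.castSucc + x (Fin.last p) := by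
    apply Measurable.add
    · exact Finset.measurable_sum _ fun l _ =>
        by fun_prop
    · exact measurable_pi_apply (Fin.last p)
  have hfm : Measurable fun x : Fin (p+1) → ℝ =>
      x i.castSucc ^ k *
        ((∑ l : Fin p, C l * x l.castSucc + x (Fin.last p)) ^ a *
          rexp (-b * (∑ l : Fin p, C l * x l.castSucc + x (Fin.last p)))) := by
    apply ((measurable_pi_apply _).pow_const k).mul
    apply Measurable.mul
    · exact hS.pow_const a
    · exact (hS.const_mul (-b)).exp
  have hO : MeasurableSet {x : Fin (p+1) → ℝ | ∀ j, 0 < x j} := measurable_orthant (p+1)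
  rw [integral_eq_lintegral_of_nonneg_ae]
  rotate_left
  · rw [Filter.EventuallyLE, ae_restrict_iff' hO]
    filter_upwards with x hx
    have h1 : 0 < x i.castSucc := hx _
    have h2 : (0:ℝ) ≤ ∑ l : Fin p, C l * x l.castSucc + x (Fin.last p) := by
      have := hx (Fin.last p)
      have hsn : (0:ℝ) ≤ ∑ l : Fin p, C l * x l.castSucc :=
        Finset.sum_nonneg fun l _ => mul_nonneg (hC l).le (hx _).le
      linarith
    have h3 : (0:ℝ) ≤ (∑ l : Fin p, C l * x l.castSucc + x (Fin.last p)) ^ a :=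
      Real.rpow_nonneg h2 a
    positivity
  · exact hfm.aestronglyMeasurable
  have hcong : ∫⁻ x in {x : Fin (p+1) → ℝ | ∀ j, 0 < x j},
      ENNReal.ofReal (x i.castSucc ^ k *
        ((∑ l : Fin p, C l * x l.castSucc + x (Fin.last p)) ^ a *
          rexp (-b * (∑ l : Fin p, C l * x l.castSucc + x (Fin.last p)))))
      = ∫⁻ x in {x : Fin (p+1) → ℝ | ∀ j, 0 < x j},
          ENNReal.ofReal (x i.castSucc ^ k) * g (∑ l, c l * x l) := by
    apply setLIntegral_congr_fun hO
    intro x hx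
    beta_reduce
    rw [hsum x, hgdef]
    exact ENNReal.ofReal_mul (pow_nonneg (hx _).le k)
  have hpc : (0:ℝ) < ∏ l, c l := Finset.prod_pos fun l _ => hc l
  have hcik : (0:ℝ) < c i.castSucc ^ k := pow_pos (hc _) k
  have hfac : (0:ℝ) < ((p+k).factorial : ℝ) := by exact_mod_cast Nat.factorial_pos _
  have hg0 : 0 < Real.Gamma (a + (p+k : ℕ) + 1) := Real.Gamma_pos_of_pos hA
  have hnn1 : (0:ℝ) ≤ (k.factorial : ℝ)
      / (((p+k).factorial : ℝ) * ((∏ l, c l) * c i.castSucc ^ k)) := by positivity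
  rw [hcong, jr_slice p g hg c hc i.castSucc k, lint_gamma (p+k) a b hb hA,
    ← ENNReal.ofReal_mul hnn1, ENNReal.toReal_ofReal (mul_nonneg hnn1
      (mul_nonneg (Real.rpow_nonneg (by positivity) _) hg0.le))]
  congr 3
  all_goals simp [hcdef, Fin.prod_univ_castSucc, Fin.snoc_castSucc, Fin.snoc_last]

/-- Variance of each `β_i` under the jointly robust prior:
`Var[β_i] = E[β_i²] - (E[β_i])² = (a+p+1)((p+1)² + p + ap + 1) / ((p+1)²(p+2) C_i² b²)`. -/
theorem jr_prior_variance
    (p : ℕ) (hp : 1 ≤ p) (a b : ℝ) (ha : -(p + 1 : ℝ) < a) (hb : 0 < b)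
    (C : Fin p → ℝ) (hC : ∀ l, 0 < C l) (i : Fin p) :
    (∫ x : Fin (p + 1) → ℝ in {x | ∀ j, 0 < x j},
        x i.castSucc ^ 2 *
          (((p.factorial : ℝ) * b ^ (a + p + 1) * (∏ l, C l) / Real.Gamma (a + p + 1)) *
            ((∑ l : Fin p, C l * x l.castSucc + x (Fin.last p)) ^ a *
              Real.exp (-b * (∑ l : Fin p, C l * x l.castSucc + x (Fin.last p))))))
      - (∫ x : Fin (p + 1) → ℝ in {x | ∀ j, 0 < x j},
          x i.castSucc *
            (((p.factorial : ℝ) * b ^ (a + p + 1) * (∏ l, C l) / Real.Gamma (a + p + 1)) *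
              ((∑ l : Fin p, C l * x l.castSucc + x (Fin.last p)) ^ a *
                Real.exp (-b * (∑ l : Fin p, C l * x l.castSucc + x (Fin.last p)))))) ^ 2
      = (a + p + 1) * ((p + 1) ^ 2 + p + a * p + 1) / ((p + 1) ^ 2 * (p + 2) * C i ^ 2 * b ^ 2) := by
  have hA1 : (0:ℝ) < a + p + 1 := by linarith
  have hG : (0:ℝ) < Real.Gamma (a + p + 1) := Real.Gamma_pos_of_pos hA1
  have ht : (0:ℝ) < b ^ (a + (p:ℝ) + 1) := Real.rpow_pos_of_pos hb _
  have hu : (0:ℝ) < (1/b) ^ (a + (p:ℝ) + 1) := Real.rpow_pos_of_pos (by positivity) _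
  have htu : b ^ (a + (p:ℝ) + 1) * (1/b) ^ (a + (p:ℝ) + 1) = 1 := by
    rw [← Real.mul_rpow hb.le (by positivity), mul_one_div_cancel hb.ne', Real.one_rpow]
  have huu : (1/b) ^ (a + (p:ℝ) + 1) = 1 / b ^ (a + (p:ℝ) + 1) :=
    eq_one_div_of_mul_eq_one_left (by rw [mul_comm]; exact htu)
  set K : ℝ := (p.factorial : ℝ) * b ^ (a + p + 1) * (∏ l, C l) / Real.Gamma (a + p + 1)
    with hK
  have hPC : (0:ℝ) < ∏ l, C l := Finset.prod_pos fun l _ => hC l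
  have hCi : (0:ℝ) < C i := hC i
  have hpf : (0:ℝ) < (p.factorial : ℝ) := by exact_mod_cast Nat.factorial_pos p
  have hp1 : (0:ℝ) < (p:ℝ) + 1 := by positivity
  have hp2 : (0:ℝ) < (p:ℝ) + 2 := by positivity
  -- the two moments
  have hm1 := jr_moment p a b ha hb C hC i 1
  have hm2 := jr_moment p a b ha hb C hC i 2
  have hc1 : a + ((p+1 : ℕ) : ℝ) + 1 = (a + p + 1) + 1 := by push_cast; ring
  have hc2 : a + ((p+2 : ℕ) : ℝ) + 1 = ((a + p + 1) + 1) + 1 := by push_cast; ring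
  rw [hc1, Real.rpow_add (by positivity : (0:ℝ) < 1/b), Real.rpow_one,
    Real.Gamma_add_one hA1.ne', huu] at hm1
  rw [hc2, Real.rpow_add (by positivity : (0:ℝ) < 1/b), Real.rpow_one,
    Real.rpow_add (by positivity : (0:ℝ) < 1/b), Real.rpow_one,
    Real.Gamma_add_one (by positivity : ((a + p + 1) + 1 : ℝ) ≠ 0),
    Real.Gamma_add_one hA1.ne', huu] at hm2
  have e1 : (∫ x : Fin (p + 1) → ℝ in {x | ∀ j, 0 < x j},
          x i.castSucc *
            (K * ((∑ l : Fin p, C l * x l.castSucc + x (Fin.last p)) ^ a *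
              Real.exp (-b * (∑ l : Fin p, C l * x l.castSucc + x (Fin.last p))))))
      = (a + p + 1) / (((p:ℝ) + 1) * C i * b) := by
    have step : (∫ x : Fin (p + 1) → ℝ in {x | ∀ j, 0 < x j},
          x i.castSucc *
            (K * ((∑ l : Fin p, C l * x l.castSucc + x (Fin.last p)) ^ a *
              Real.exp (-b * (∑ l : Fin p, C l * x l.castSucc + x (Fin.last p))))))
        = K * ∫ x : Fin (p + 1) → ℝ in {x | ∀ j, 0 < x j},
            x i.castSucc ^ 1 *
              ((∑ l : Fin p, C l * x l.castSucc + x (Fin.last p)) ^ a *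
                Real.exp (-b * (∑ l : Fin p, C l * x l.castSucc + x (Fin.last p)))) := by
      rw [← integral_const_mul]
      apply integral_congr_ae (Filter.Eventually.of_forall fun x => ?_)
      rw [pow_one]; ring
    rw [step, hm1, hK]
    have hfac1 : ((p+1).factorial : ℝ) = ((p:ℝ)+1) * (p.factorial : ℝ) := by
      rw [Nat.factorial_succ]; push_cast; ring
    rw [hfac1]
    simp only [Nat.factorial_one, Nat.cast_one, pow_one]
    field_simp
  have e2 : (∫ x : Fin (p + 1) → ℝ in {x | ∀ j, 0 < x j},
          x i.castSucc ^ 2 *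
            (K * ((∑ l : Fin p, C l * x l.castSucc + x (Fin.last p)) ^ a *
              Real.exp (-b * (∑ l : Fin p, C l * x l.castSucc + x (Fin.last p))))))
      = 2 * (a + p + 1) * ((a + p + 1) + 1)
          / (((p:ℝ) + 1) * ((p:ℝ) + 2) * C i ^ 2 * b ^ 2) := by
    have step : (∫ x : Fin (p + 1) → ℝ in {x | ∀ j, 0 < x j},
          x i.castSucc ^ 2 *
            (K * ((∑ l : Fin p, C l * x l.castSucc + x (Fin.last p)) ^ a *
              Real.exp (-b * (∑ l : Fin p, C l * x l.castSucc + x (Fin.last p))))))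
        = K * ∫ x : Fin (p + 1) → ℝ in {x | ∀ j, 0 < x j},
            x i.castSucc ^ 2 *
              ((∑ l : Fin p, C l * x l.castSucc + x (Fin.last p)) ^ a *
                Real.exp (-b * (∑ l : Fin p, C l * x l.castSucc + x (Fin.last p)))) := by
      rw [← integral_const_mul]
      apply integral_congr_ae (Filter.Eventually.of_forall fun x => ?_)
      ring
    rw [step, hm2, hK]
    have hfac2 : ((p+2).factorial : ℝ)
        = ((p:ℝ)+2) * (((p:ℝ)+1) * (p.factorial : ℝ)) := by
      rw [show p+2 = (p+1)+1 from rfl, Nat.factorial_succ, Nat.factorial_succ]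
      push_cast; ring
    rw [hfac2]
    norm_num
    field_simp
  rw [e1, e2]
  field_simp
  ring
end

section
/- Under the jointly robust prior with density proportional to (∑_{l=1}^p C_l β_l + η)^a exp(−b(∑_{l=1}^p C_l β_l + η)) on (0,∞)^{p+1}, the random variable Z = ∑_{l=1}^p C_l β_l + η has a Gamma distribution with shape parameter a + p + 1 and rate parameter b. -/
open MeasureTheory Real Finset ProbabilityTheory
open scoped ENNReal

lemma lint_scale_s16 (c : ℝ) (hc : 0 < c) (f : ℝ → ℝ≥0∞) (hf : Measurable f) :
    ∫⁻ x in Set.Ioi (0:ℝ), f (c * x) = ENNReal.ofReal c⁻¹ * ∫⁻ y in Set.Ioi (0:ℝ), f y := by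
  have h1 : (c * ·) ⁻¹' (Set.Ioi (0:ℝ)) = Set.Ioi 0 := by
    ext x; simp [mul_pos_iff_of_pos_left, hc]
  have hmap : Measure.map (c * ·) (volume.restrict (Set.Ioi (0:ℝ)))
      = ENNReal.ofReal c⁻¹ • volume.restrict (Set.Ioi 0) := by
    rw [show volume.restrict (Set.Ioi (0:ℝ)) = volume.restrict ((c * ·) ⁻¹' (Set.Ioi (0:ℝ))) by rw [h1],
      ← Measure.restrict_map (measurable_const_mul c) measurableSet_Ioi,
      Real.map_volume_mul_left hc.ne', Measure.restrict_smul,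
      abs_of_pos (inv_pos.mpr hc), h1]
  calc ∫⁻ x in Set.Ioi (0:ℝ), f (c * x)
      = ∫⁻ y, f y ∂(Measure.map (c * ·) (volume.restrict (Set.Ioi (0:ℝ)))) := by
        rw [lintegral_map hf (measurable_const_mul c)]
    _ = ENNReal.ofReal c⁻¹ * ∫⁻ y in Set.Ioi (0:ℝ), f y := by
        rw [hmap]; simp [lintegral_smul_measure]

lemma lint_translate (z : ℝ) (f : ℝ → ℝ≥0∞) (hf : Measurable f) :
    ∫⁻ x in Set.Ioi (0:ℝ), f (z + x) = ∫⁻ w in Set.Ioi z, f w := by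
  have h1 : (z + ·) ⁻¹' (Set.Ioi z) = Set.Ioi 0 := by ext x; simp
  have hmap : Measure.map (z + ·) (volume.restrict (Set.Ioi (0:ℝ)))
      = volume.restrict (Set.Ioi z) := by
    rw [← h1, ← Measure.restrict_map (measurable_const_add z) measurableSet_Ioi,
      Measure.IsAddLeftInvariant.map_add_left_eq_self (μ := (volume : Measure ℝ)) z]
  rw [← hmap, lintegral_map hf (measurable_const_add z)]

lemma lint_pow_Ioo_s16 (n : ℕ) (w : ℝ) (hw : 0 < w) :
    ∫⁻ z in Set.Ioo (0:ℝ) w, ENNReal.ofReal (z ^ n / n.factorial)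
      = ENNReal.ofReal (w ^ (n+1) / (n+1).factorial) := by
  have hint : IntegrableOn (fun z : ℝ => z ^ n / n.factorial) (Set.Ioo 0 w) volume := by
    apply IntegrableOn.mono_set (t := Set.Icc 0 w) _ Set.Ioo_subset_Icc_self
    exact (Continuous.integrableOn_Icc (by continuity))
  rw [← ofReal_integral_eq_lintegral_ofReal hint]
  · congr 1
    rw [← MeasureTheory.integral_Ioc_eq_integral_Ioo, ← intervalIntegral.integral_of_le hw.le]
    rw [intervalIntegral.integral_div, integral_pow]
    have : ((n+1).factorial : ℝ) = (n+1) * n.factorial := by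
      rw [Nat.factorial_succ]; push_cast; ring
    rw [this]
    have h1 : (0:ℝ) ^ (n+1) = 0 := by simp
    rw [h1]
    have hnf : (n.factorial : ℝ) ≠ 0 := Nat.cast_ne_zero.mpr n.factorial_ne_zero
    field_simp
    ring
  · filter_upwards [self_mem_ae_restrict measurableSet_Ioo] with z hz
    have := hz.1
    positivity

lemma lint_translate' (z : ℝ) (f : ℝ → ℝ≥0∞) (hf : Measurable f) :
    ∫⁻ x in Set.Ioi (0:ℝ), f (x + z) = ∫⁻ w in Set.Ioi z, f w := by
  have : ∀ x, x + z = z + x := fun x => add_comm x z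
  simp_rw [this]
  exact lint_translate z f hf

lemma conv_step (n : ℕ) (f : ℝ → ℝ≥0∞) (hf : Measurable f) :
    ∫⁻ t in Set.Ioi (0:ℝ), ∫⁻ z in Set.Ioi (0:ℝ),
        ENNReal.ofReal (z ^ n / n.factorial) * f (t + z)
      = ∫⁻ w in Set.Ioi (0:ℝ), ENNReal.ofReal (w ^ (n+1) / (n+1).factorial) * f w := by
  set g : ℝ → ℝ≥0∞ := fun z => ENNReal.ofReal (z ^ n / n.factorial) with hg
  have hgm : Measurable g := by
    apply Measurable.ennreal_ofReal; fun_prop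
  have huncurry : Measurable (Function.uncurry fun t z => g z * f (t + z)) := by
    apply Measurable.mul
    · exact hgm.comp measurable_snd
    · exact hf.comp (measurable_fst.add measurable_snd)
  rw [lintegral_lintegral_swap huncurry.aemeasurable]
  have step1 : ∫⁻ z in Set.Ioi (0:ℝ), ∫⁻ t in Set.Ioi (0:ℝ), g z * f (t + z)
      = ∫⁻ z in Set.Ioi (0:ℝ), ∫⁻ w in Set.Ioi (0:ℝ), g z * (Set.Ioi z).indicator f w := by
    apply setLIntegral_congr_fun measurableSet_Ioi
    intro z hz
    have hind : ∀ w, g z * (Set.Ioi z).indicator f w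
        = (Set.Ioi z).indicator (fun w => g z * f w) w := by
      intro w; by_cases h : w ∈ Set.Ioi z <;> simp [h]
    simp_rw [hind]
    rw [lintegral_const_mul _ (show Measurable fun t : ℝ => f (t + z) from hf.comp (by fun_prop)),
      lint_translate' z f hf,
      lintegral_indicator measurableSet_Ioi,
      Measure.restrict_restrict measurableSet_Ioi,
      Set.inter_eq_left.mpr (Set.Ioi_subset_Ioi (le_of_lt hz)),
      lintegral_const_mul _ hf]
  rw [step1]
  have huncurry2 : Measurable (Function.uncurry fun z w => g z * (Set.Ioi z).indicator f w) := by
    have heq : (Function.uncurry fun z w => g z * (Set.Ioi z).indicator f w)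
        = fun p : ℝ × ℝ => g p.1 * ({q : ℝ × ℝ | q.1 < q.2}.indicator (fun q => f q.2) p) := by
      ext p
      by_cases h : p.1 < p.2 <;>
        simp [Function.uncurry, Set.indicator_apply, h, Set.mem_Ioi]
    rw [heq]
    exact (hgm.comp measurable_fst).mul
      ((hf.comp measurable_snd).indicator (measurableSet_lt measurable_fst measurable_snd))
  rw [lintegral_lintegral_swap huncurry2.aemeasurable]
  apply setLIntegral_congr_fun measurableSet_Ioi
  intro w hw
  have hind2 : ∀ z, g z * (Set.Ioi z).indicator f w
      = (Set.Iio w).indicator (fun z => g z * f w) z := by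
    intro z
    by_cases h : z < w <;> simp [Set.indicator_apply, h, Set.mem_Ioi, Set.mem_Iio]
  simp_rw [hind2]
  rw [lintegral_indicator measurableSet_Iio,
    Measure.restrict_restrict measurableSet_Iio, Set.Iio_inter_Ioi,
    lintegral_mul_const _ hgm, lint_pow_Ioo_s16 n w hw, mul_comm]

lemma key_sum (n : ℕ) (C : Fin n → ℝ) (hC : ∀ i, 0 < C i) (f : ℝ → ℝ≥0∞)
    (hf : Measurable f) :
    ∫⁻ x in {x : Fin (n+1) → ℝ | ∀ i, 0 < x i},
        f (∑ l : Fin n, C l * x l.castSucc + x (Fin.last n))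
      = (∏ l, ENNReal.ofReal (C l))⁻¹ *
          ∫⁻ z in Set.Ioi (0:ℝ), ENNReal.ofReal (z ^ n / n.factorial) * f z := by
  induction n generalizing f with
  | zero =>
    simp only [Finset.univ_eq_empty, Finset.sum_empty, zero_add, Finset.prod_empty, inv_one,
      one_mul, pow_zero, Nat.factorial_zero, Nat.cast_one, div_one, ENNReal.ofReal_one]
    have mp := volume_preserving_funUnique (Fin 1) ℝ
    set e := MeasurableEquiv.funUnique (Fin 1) ℝ with he
    have hS : e '' {x : Fin 1 → ℝ | ∀ i, 0 < x i} = Set.Ioi 0 := by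
      ext y
      constructor
      · rintro ⟨x, hx, rfl⟩; exact hx default
      · intro hy
        exact ⟨fun _ => y, fun i => hy, rfl⟩
    calc ∫⁻ x in {x : Fin 1 → ℝ | ∀ i, 0 < x i}, f (x (Fin.last 0))
        = ∫⁻ x in {x : Fin 1 → ℝ | ∀ i, 0 < x i}, f (e x) := rfl
      _ = ∫⁻ y in e '' {x : Fin 1 → ℝ | ∀ i, 0 < x i}, f y :=
          mp.setLIntegral_comp_emb e.measurableEmbedding f _
      _ = ∫⁻ y in Set.Ioi 0, f y := by rw [hS]
  | succ n IH =>
    set C' : Fin n → ℝ := fun l => C l.succ with hC'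
    have hC'pos : ∀ l, 0 < C' l := fun l => hC l.succ
    set S' : Set (Fin (n+1) → ℝ) := {y | ∀ i, 0 < y i} with hS'def
    have hS'm : MeasurableSet S' := by
      rw [hS'def, Set.setOf_forall]
      exact MeasurableSet.iInter fun i => measurableSet_lt measurable_const
        (measurable_pi_apply i)
    set F : ℝ × (Fin (n+1) → ℝ) → ℝ≥0∞ := fun p =>
      f (C 0 * p.1 + (∑ l : Fin n, C' l * p.2 l.castSucc + p.2 (Fin.last n))) with hF
    have hFm : Measurable F := by
      apply hf.comp
      fun_prop
    set e := MeasurableEquiv.piFinSuccAbove (fun _ : Fin (n+2) => ℝ) 0 with he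
    have mp := volume_preserving_piFinSuccAbove (fun _ : Fin (n+2) => ℝ) 0
    have hFe : ∀ x : Fin (n+2) → ℝ,
        f (∑ l : Fin (n+1), C l * x l.castSucc + x (Fin.last (n+1))) = F (e x) := by
      intro x
      apply congr_arg
      show _ = C 0 * x 0 + (∑ l : Fin n, C l.succ * x ((0:Fin (n+2)).succAbove l.castSucc)
        + x ((0:Fin (n+2)).succAbove (Fin.last n)))
      simp only [Fin.zero_succAbove, Fin.sum_univ_succ, Fin.castSucc_zero, Fin.succ_castSucc,
        Fin.succ_last]
      ring
    have hS : e '' {x : Fin (n+2) → ℝ | ∀ i, 0 < x i} = Set.Ioi 0 ×ˢ S' := by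
      rw [MeasurableEquiv.image_eq_preimage_symm]
      ext p
      simp only [Set.mem_preimage, Set.mem_setOf_eq, Set.mem_prod, Set.mem_Ioi, hS'def]
      show (∀ i, 0 < (e.symm p) i) ↔ _
      rw [he]
      simp only [MeasurableEquiv.piFinSuccAbove_symm_apply, Fin.insertNth_zero]
      rw [Fin.forall_fin_succ]
      simp [Fin.cons_zero, Fin.cons_succ]
    have hprodne : (∏ l : Fin n, ENNReal.ofReal (C' l)) ≠ 0 := by
      rw [Finset.prod_ne_zero_iff]
      exact fun l _ => by simp [ENNReal.ofReal_pos.mpr (hC'pos l), ne_of_gt]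
    have huncurry : Measurable (Function.uncurry fun t z =>
        ENNReal.ofReal (z ^ n / n.factorial) * f (t + z)) := by
      apply Measurable.mul
      · apply Measurable.ennreal_ofReal; fun_prop
      · exact hf.comp (measurable_fst.add measurable_snd)
    have hH : Measurable fun t => ∫⁻ z in Set.Ioi (0:ℝ),
        ENNReal.ofReal (z ^ n / n.factorial) * f (t + z) :=
      Measurable.lintegral_prod_right huncurry
    calc ∫⁻ x in {x : Fin (n+2) → ℝ | ∀ i, 0 < x i},
          f (∑ l : Fin (n+1), C l * x l.castSucc + x (Fin.last (n+1)))
        = ∫⁻ x in {x : Fin (n+2) → ℝ | ∀ i, 0 < x i}, F (e x) := by simp_rw [hFe]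
      _ = ∫⁻ p in e '' {x : Fin (n+2) → ℝ | ∀ i, 0 < x i}, F p :=
          mp.setLIntegral_comp_emb e.measurableEmbedding F _
      _ = ∫⁻ p, F p ∂((volume.restrict (Set.Ioi 0)).prod (volume.restrict S')) := by
          rw [hS, Measure.prod_restrict, ← Measure.volume_eq_prod]
      _ = ∫⁻ t in Set.Ioi (0:ℝ), ∫⁻ y in S',
            f (C 0 * t + (∑ l : Fin n, C' l * y l.castSucc + y (Fin.last n))) := by
          rw [lintegral_prod _ hFm.aemeasurable]
      _ = ∫⁻ t in Set.Ioi (0:ℝ), (∏ l : Fin n, ENNReal.ofReal (C' l))⁻¹ *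
            ∫⁻ z in Set.Ioi (0:ℝ), ENNReal.ofReal (z ^ n / n.factorial)
              * f (C 0 * t + z) := by
          apply setLIntegral_congr_fun measurableSet_Ioi
          intro t _
          exact IH C' hC'pos (fun z => f (C 0 * t + z)) (hf.comp (by fun_prop))
      _ = (∏ l : Fin n, ENNReal.ofReal (C' l))⁻¹ *
            ∫⁻ t in Set.Ioi (0:ℝ), ∫⁻ z in Set.Ioi (0:ℝ),
              ENNReal.ofReal (z ^ n / n.factorial) * f (C 0 * t + z) := by
          rw [lintegral_const_mul' _ _ (ENNReal.inv_ne_top.mpr hprodne)]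
      _ = (∏ l : Fin n, ENNReal.ofReal (C' l))⁻¹ * (ENNReal.ofReal (C 0)⁻¹ *
            ∫⁻ t in Set.Ioi (0:ℝ), ∫⁻ z in Set.Ioi (0:ℝ),
              ENNReal.ofReal (z ^ n / n.factorial) * f (t + z)) := by
          rw [← lint_scale_s16 (C 0) (hC 0) _ hH]
      _ = (∏ l : Fin (n+1), ENNReal.ofReal (C l))⁻¹ *
            ∫⁻ z in Set.Ioi (0:ℝ), ENNReal.ofReal (z ^ (n+1) / (n+1).factorial) * f z := by
          rw [conv_step n f hf, Fin.prod_univ_succ, ← mul_assoc]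
          congr 1
          rw [ENNReal.mul_inv (Or.inl (by simp [ne_of_gt, ENNReal.ofReal_pos.mpr (hC 0)]))
              (Or.inl ENNReal.ofReal_ne_top),
            ENNReal.ofReal_inv_of_pos (hC 0), mul_comm]

lemma ofReal_prod_pos {ι : Type*} (s : Finset ι) (f : ι → ℝ) (hf : ∀ i ∈ s, 0 ≤ f i) :
    ENNReal.ofReal (∏ i ∈ s, f i) = ∏ i ∈ s, ENNReal.ofReal (f i) := by
  classical
  induction s using Finset.induction with
  | empty => simp
  | @insert i s hi ih =>
    rw [Finset.prod_insert hi, Finset.prod_insert hi,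
      ENNReal.ofReal_mul (hf i (Finset.mem_insert_self i s)),
      ih (fun j hj => hf j (Finset.mem_insert_of_mem hj))]


/-- Under the jointly robust prior, the random variable `Z = ∑ C_l β_l + η` has a Gamma
distribution with shape `a + p + 1` and rate `b`. -/
theorem jr_prior_sum_gamma_distributed
    (p : ℕ) (hp : 1 ≤ p) (a b : ℝ) (ha : -(p + 1 : ℝ) < a) (hb : 0 < b)
    (C : Fin p → ℝ) (hC : ∀ l, 0 < C l) :
    Measure.map
      (fun x : Fin (p + 1) → ℝ => ∑ l : Fin p, C l * x l.castSucc + x (Fin.last p))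
      ((volume.restrict {x : Fin (p + 1) → ℝ | ∀ i, 0 < x i}).withDensity
        (fun x => ENNReal.ofReal
          (((p.factorial : ℝ) * b ^ (a + p + 1) * (∏ l, C l) / Real.Gamma (a + p + 1)) *
            ((∑ l : Fin p, C l * x l.castSucc + x (Fin.last p)) ^ a *
              Real.exp (-b * (∑ l : Fin p, C l * x l.castSucc + x (Fin.last p)))))))
      = gammaMeasure (a + p + 1) b := by
  have hT : Measurable (fun x : Fin (p + 1) → ℝ =>
      ∑ l : Fin p, C l * x l.castSucc + x (Fin.last p)) := by fun_prop
  have ha' : (0:ℝ) < a + p + 1 := by linarith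
  have hGam : (0:ℝ) < Real.Gamma (a + p + 1) := Real.Gamma_pos_of_pos ha'
  have hrpow : (0:ℝ) < b ^ (a + p + 1) := Real.rpow_pos_of_pos hb _
  have hprod : (0:ℝ) < ∏ l, C l := Finset.prod_pos fun l _ => hC l
  set K : ℝ := (p.factorial : ℝ) * b ^ (a + p + 1) * (∏ l, C l) / Real.Gamma (a + p + 1)
    with hK
  have hKpos : 0 < K := by
    have h4 : (0:ℝ) < p.factorial := by positivity
    rw [hK]; positivity
  set T : (Fin (p + 1) → ℝ) → ℝ :=
    fun x => ∑ l : Fin p, C l * x l.castSucc + x (Fin.last p) with hTd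
  set h : ℝ → ℝ≥0∞ := fun z => ENNReal.ofReal (K * (z ^ a * Real.exp (-b * z))) with hh
  have hhm : Measurable h := by
    apply Measurable.ennreal_ofReal
    apply Measurable.const_mul
    exact (measurable_id.pow_const _).mul (by fun_prop)
  apply Measure.ext; intro s hs
  set g : ℝ → ℝ≥0∞ := fun z => h z * s.indicator 1 z with hg
  have hgm : Measurable g := hhm.mul (measurable_one.indicator hs)
  rw [Measure.map_apply hT hs, withDensity_apply _ (hT hs)]
  have hstep1 : ∫⁻ x in T ⁻¹' s, h (T x)
        ∂(volume.restrict {x : Fin (p + 1) → ℝ | ∀ i, 0 < x i})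
      = ∫⁻ x in {x : Fin (p + 1) → ℝ | ∀ i, 0 < x i}, g (T x) := by
    rw [← lintegral_indicator (hT hs)]
    apply lintegral_congr
    intro x
    by_cases hx : T x ∈ s
    · simp [hg, Set.indicator_apply, hx]
    · simp [hg, Set.indicator_apply, hx]
  rw [hstep1, key_sum p C hC g hgm]
  unfold gammaMeasure
  rw [withDensity_apply _ hs]
  -- split the RHS integral
  have hdisj : Disjoint (s ∩ Set.Ioi (0:ℝ)) (s \ Set.Ioi 0) :=
    Set.disjoint_left.mpr fun x hx hx2 => hx2.2 hx.2
  have hzero : ∫⁻ z in s \ Set.Ioi 0, gammaPDF (a + p + 1) b z = 0 := by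
    have hae : ∀ᵐ z ∂(volume.restrict (s \ Set.Ioi 0)), gammaPDF (a + p + 1) b z = 0 := by
      have h1 : ∀ᵐ z ∂(volume.restrict (s \ Set.Ioi 0)), z ∈ s \ Set.Ioi 0 :=
        ae_restrict_mem (hs.diff measurableSet_Ioi)
      have h2 : ∀ᵐ z ∂(volume.restrict (s \ Set.Ioi 0)), z ≠ (0:ℝ) := by
        apply ae_restrict_of_ae
        refine ae_iff.mpr ?_
        simp
      filter_upwards [h1, h2] with z hz hz0
      have : z < 0 := lt_of_le_of_ne (not_lt.mp hz.2) hz0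
      exact gammaPDF_of_neg this
    rw [lintegral_congr_ae hae, lintegral_zero]
  have hsplit : ∫⁻ z in s, gammaPDF (a + p + 1) b z
      = ∫⁻ z in s ∩ Set.Ioi 0, gammaPDF (a + p + 1) b z := by
    rw [← Set.inter_union_diff s (Set.Ioi 0),
      lintegral_union (hs.diff measurableSet_Ioi) hdisj, hzero, add_zero,
      Set.inter_union_diff]
  rw [hsplit]
  -- main pointwise identity on Ioi 0
  have hmain : ∫⁻ z in Set.Ioi (0:ℝ), ENNReal.ofReal (z ^ p / p.factorial) * g z
      = ENNReal.ofReal (∏ l, C l) * ∫⁻ z in s ∩ Set.Ioi 0, gammaPDF (a + p + 1) b z := by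
    have hptwise : ∀ z ∈ Set.Ioi (0:ℝ), ENNReal.ofReal (z ^ p / p.factorial) * g z
        = ENNReal.ofReal (∏ l, C l) * s.indicator (gammaPDF (a + p + 1) b) z := by
      intro z hz
      have hz' : (0:ℝ) < z := hz
      by_cases hzs : z ∈ s
      · have hind : s.indicator (1 : ℝ → ℝ≥0∞) z = 1 := Set.indicator_of_mem hzs 1
        rw [hg]
        simp only [hind, mul_one, Set.indicator_of_mem hzs]
        rw [gammaPDF_of_nonneg hz'.le, hh]
        rw [← ENNReal.ofReal_mul (by positivity), ← ENNReal.ofReal_mul hprod.le]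
        congr 1
        have hpow : z ^ p * z ^ a = z ^ (a + p) := by
          rw [← Real.rpow_natCast z p, ← Real.rpow_add hz']
          ring_nf
        have hexp : a + (p:ℝ) + 1 - 1 = a + p := by ring
        rw [hexp, hK, ← hpow, neg_mul]
        field_simp
      · simp [hg, Set.indicator_of_notMem hzs]
    rw [setLIntegral_congr_fun measurableSet_Ioi hptwise,
      lintegral_const_mul _ ((show Measurable (gammaPDF (a + ↑p + 1) b) from
        (measurable_gammaPDFReal _ _).ennreal_ofReal).indicator hs),
      lintegral_indicator hs, Measure.restrict_restrict hs]
  rw [hmain, ← mul_assoc, ofReal_prod_pos _ _ (fun l _ => (hC l).le),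
    ENNReal.inv_mul_cancel, one_mul]
  · rw [Finset.prod_ne_zero_iff]
    exact fun l _ => by simp [ne_of_gt, ENNReal.ofReal_pos.mpr (hC l)]
  · exact ENNReal.prod_ne_top fun l _ => ENNReal.ofReal_ne_top
end
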